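/- Let X be a real Banach space with topological dual X*, and let T : X ⇉ X* be a set-valued operator identified with its graph. There exists a lower semicontinuous proper convex functional f : X → ℝ ∪ {+∞} such that T = ∂f if and only if T is maximally monotone and there exists a monotone operator A : X × ℝ ⇉ X* × ℝ satisfying (i) there exists x* ∈ X* with sup{⟨x, x*⟩ − λ : (x, λ) ∈ cl conv (dom A)} < +∞, (ii) (0_X, 1) belongs to the recession cone of cl conv (dom A), (iii) (0_{X*}, 0) ∈ A(x, λ) for every (x, λ) ∈ dom A, such that T = A_X, where A_X(x) := {x* ∈ X* : (x*, −1) ∈ A(x, λ) for some λ ∈ ℝ}. -/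

import Mathlib

open Set

noncomputable section

variable {X : Type*} [NormedAddCommGroup X] [NormedSpace ℝ X]

/-- Monotonicity of a set-valued operator `T : X ⇉ X*`, identified with its graph. -/
def MonotoneGraph (T : Set (X × (X →L[ℝ] ℝ))) : Prop :=
  ∀ p ∈ T, ∀ q ∈ T, 0 ≤ (p.2 - q.2) (p.1 - q.1)

/-- Maximal monotonicity: monotone and not properly contained in any monotone graph. -/
def MaximalMonotoneGraph (T : Set (X × (X →L[ℝ] ℝ))) : Prop :=
  MonotoneGraph T ∧ ∀ S : Set (X × (X →L[ℝ] ℝ)), MonotoneGraph S → T ⊆ S → S = T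

/-- Domain of a set-valued operator given by its graph. -/
def graphDom (T : Set (X × (X →L[ℝ] ℝ))) : Set X := {x | ∃ u, (x, u) ∈ T}

/-- Range of a set-valued operator given by its graph. -/
def graphRange (T : Set (X × (X →L[ℝ] ℝ))) : Set (X →L[ℝ] ℝ) := {u | ∃ x, (x, u) ∈ T}

/-- The normal cone operator `N_C : X ⇉ X*` of a set `C ⊆ X`, as a graph. -/
def normalConeGraph (C : Set X) : Set (X × (X →L[ℝ] ℝ)) :=
  {p | p.1 ∈ C ∧ ∀ y ∈ C, p.2 (y - p.1) ≤ 0}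

/-- The Fenchel subdifferential operator `∂f : X ⇉ X*` of `f : X → ℝ ∪ {+∞}`, as a graph. -/
def subdiffGraph (f : X → EReal) : Set (X × (X →L[ℝ] ℝ)) :=
  {p | ∀ y : X, f p.1 + ((p.2 (y - p.1) : ℝ) : EReal) ≤ f y}

/-- `f` is proper: never `−∞` and not identically `+∞`. -/
def ProperFn (f : X → EReal) : Prop := (∀ x, f x ≠ ⊥) ∧ ∃ x, f x ≠ ⊤

/-- Convexity of an extended-real-valued functional. -/
def ConvexFn (f : X → EReal) : Prop :=
  ∀ x y : X, ∀ t : ℝ, 0 ≤ t → t ≤ 1 →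
    f (t • x + (1 - t) • y) ≤ (t : EReal) * f x + ((1 - t : ℝ) : EReal) * f y

/-- Positive homogeneity: `f (c • x) = c * f x` for `c ≥ 0` and `f x` finite. -/
def PosHomFn (f : X → EReal) : Prop :=
  ∀ x : X, f x ≠ ⊤ → ∀ c : ℝ, 0 ≤ c → f (c • x) = (c : EReal) * f x

/-- The epigraph of `f : X → ℝ ∪ {+∞}`. -/
def Epi (f : X → EReal) : Set (X × ℝ) := {p | f p.1 ≤ (p.2 : EReal)}

/-- Duality pairing between `X × ℝ` and `X* × ℝ`. -/
def pairXR (p : X × ℝ) (q : (X →L[ℝ] ℝ) × ℝ) : ℝ := q.1 p.1 + p.2 * q.2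

/-- Monotonicity of an operator `A : X × ℝ ⇉ X* × ℝ`, identified with its graph. -/
def MonotoneGraphXR (A : Set ((X × ℝ) × ((X →L[ℝ] ℝ) × ℝ))) : Prop :=
  ∀ p ∈ A, ∀ q ∈ A, 0 ≤ pairXR (p.1 - q.1) (p.2 - q.2)

/-- Domain of an operator `A : X × ℝ ⇉ X* × ℝ`. -/
def graphDomXR (A : Set ((X × ℝ) × ((X →L[ℝ] ℝ) × ℝ))) : Set (X × ℝ) :=
  {c | ∃ u, (c, u) ∈ A}

/-- The normal cone operator of a subset of `X × ℝ`, as a graph. -/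
def normalConeGraphXR (C : Set (X × ℝ)) : Set ((X × ℝ) × ((X →L[ℝ] ℝ) × ℝ)) :=
  {p | p.1 ∈ C ∧ ∀ d ∈ C, pairXR (d - p.1) p.2 ≤ 0}

/-- The operator `A_X : X ⇉ X*` induced by `A : X × ℝ ⇉ X* × ℝ`. -/
def inducedGraph (A : Set ((X × ℝ) × ((X →L[ℝ] ℝ) × ℝ))) : Set (X × (X →L[ℝ] ℝ)) :=
  {p | ∃ lam : ℝ, ((p.1, lam), (p.2, (-1 : ℝ))) ∈ A}

/-- `d` belongs to the recession cone of `C`, i.e. `C + ℝ₊ d = C` (as a set equality). -/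
def recessionEq {Y : Type*} [AddCommGroup Y] [Module ℝ Y] (C : Set Y) (d : Y) : Prop :=
  {y | ∃ c ∈ C, ∃ t : ℝ, 0 ≤ t ∧ y = c + t • d} = C

section Chunk1

variable {X : Type*} [NormedAddCommGroup X] [NormedSpace ℝ X]

/-- real helper: pass to the limit in a strict linear inequality. -/
private lemma real_sup_aux {β a c M : ℝ} (hβ : 0 < β) (h : ∀ t < c, a + t * β < M) :
    a + c * β ≤ M := by
  by_contra hc
  push_neg at hc
  have h1 := h (c - (a + c * β - M) / (2 * β)) (by
    have : 0 < (a + c * β - M) / (2 * β) := div_pos (by linarith) (by linarith)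
    linarith)
  have h2 : a + (c - (a + c * β - M) / (2 * β)) * β = a + c * β - (a + c * β - M) / 2 := by
    field_simp; ring
  rw [h2] at h1
  linarith

/-- real helper: a linear function bounded below on a ray has nonneg slope. -/
private lemma real_ray_aux {β a T s : ℝ} (h : ∀ t, T ≤ t → s ≤ a + t * β) : 0 ≤ β := by
  by_contra hc
  push_neg at hc
  have hs : s ≤ a + T * β := h T le_rfl
  have h1 := h (T + (a + T * β - s + 1) / (-β)) (by
    have : 0 < (a + T * β - s + 1) / (-β) := div_pos (by linarith) (by linarith)
    linarith)
  have hβne : β ≠ 0 := ne_of_lt hc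
  have h2 : a + (T + (a + T * β - s + 1) / (-β)) * β = s - 1 := by
    have h : (a + T * β - s + 1) / (-β) * β = -(a + T * β - s + 1) := by
      rw [div_mul_eq_mul_div, div_neg, mul_div_assoc, div_self hβne, mul_one]
    nlinarith [h]
  rw [h2] at h1; linarith

private lemma ereal_coe_lt_add_coe_iff (r c : ℝ) (a : EReal) :
    (r : EReal) < a + (c : EReal) ↔ ((r - c : ℝ) : EReal) < a := by
  induction a using EReal.rec with
  | bot =>
      rw [EReal.bot_add]
      exact iff_of_false (by simp) (by simp)
  | top =>
      rw [EReal.top_add_coe]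
      exact iff_of_true (EReal.coe_lt_top r) (EReal.coe_lt_top _)
  | coe x =>
      rw [← EReal.coe_add, EReal.coe_lt_coe_iff, EReal.coe_lt_coe_iff]
      constructor <;> intro <;> linarith

private lemma ereal_exists_real_between {a b : EReal} (ra : ℝ) (hra : a = (ra : EReal))
    (h : a < b) : ∃ α : ℝ, a < (α : EReal) ∧ (α : EReal) < b := by
  obtain ⟨y, h1, h2⟩ := EReal.exists_between_coe_real h
  exact ⟨y, h1, h2⟩

/-- lsc + continuous real function is lsc. -/
lemma lsc_add_cont {α : Type*} [TopologicalSpace α] {f : α → EReal}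
    (hf : LowerSemicontinuous f) (hb : ∀ x, f x ≠ ⊥) {g : α → ℝ} (hg : Continuous g) :
    LowerSemicontinuous fun x => f x + (g x : EReal) := by
  intro x₀ y hy
  induction y using EReal.rec with
  | top => exact absurd hy (not_top_lt)
  | bot =>
      refine Filter.Eventually.of_forall fun x => ?_
      show ⊥ < f x + (g x : EReal)
      rw [bot_lt_iff_ne_bot]
      simp [EReal.add_eq_bot_iff, hb x]
  | coe r =>
      change (r : EReal) < f x₀ + (g x₀ : EReal) at hy
      rw [ereal_coe_lt_add_coe_iff] at hy
      obtain ⟨ρ, h1, h2⟩ := EReal.exists_between_coe_real hy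
      rw [EReal.coe_lt_coe_iff] at h1
      have hε : 0 < ρ - (r - g x₀) := by linarith
      have e1 := hf x₀ (ρ : EReal) h2
      have e2 : ∀ᶠ x in nhds x₀, g x₀ - (ρ - (r - g x₀)) < g x :=
        (hg.continuousAt (x := x₀)).eventually (eventually_gt_nhds (by linarith))
      filter_upwards [e1, e2] with x hx1 hx2
      calc (r : EReal) < ((ρ + g x : ℝ) : EReal) := by
            rw [EReal.coe_lt_coe_iff]; linarith
        _ = (ρ : EReal) + (g x : EReal) := EReal.coe_add _ _
        _ ≤ f x + (g x : EReal) := add_le_add_left hx1.le _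

/-- The epigraph of a lower semicontinuous function is closed. -/
lemma epi_closed {f : X → EReal} (hf : LowerSemicontinuous f) : IsClosed (Epi f) := by
  have h1 : IsClosed {p : X × EReal | f p.1 ≤ p.2} :=
    lowerSemicontinuous_iff_isClosed_epigraph.1 hf
  have : Epi f = (fun p : X × ℝ => (p.1, (p.2 : EReal))) ⁻¹' {p : X × EReal | f p.1 ≤ p.2} := rfl
  rw [this]
  exact h1.preimage (continuous_fst.prodMk (continuous_coe_real_ereal.comp continuous_snd))

/-- The epigraph of a convex function is convex. -/
lemma epi_convex {f : X → EReal} (hf : ConvexFn f) : Convex ℝ (Epi f) := by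
  rintro ⟨x, a⟩ hxa ⟨y, b⟩ hyb s t hs ht hst
  have ht' : t = 1 - s := by linarith
  subst ht'
  have h1 : f (s • x + (1 - s) • y) ≤ (s : EReal) * f x + ((1 - s : ℝ) : EReal) * f y :=
    hf x y s hs (by linarith)
  refine le_trans h1 ?_
  have h2 : (s : EReal) * f x ≤ (s : EReal) * (a : EReal) :=
    mul_le_mul_of_nonneg_left hxa (by exact_mod_cast hs)
  have h3 : ((1 - s : ℝ) : EReal) * f y ≤ ((1 - s : ℝ) : EReal) * (b : EReal) :=
    mul_le_mul_of_nonneg_left hyb (by exact_mod_cast ht)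
  calc (s : EReal) * f x + ((1 - s : ℝ) : EReal) * f y
      ≤ (s : EReal) * (a : EReal) + ((1 - s : ℝ) : EReal) * (b : EReal) := add_le_add h2 h3
    _ = (((s • (x, a) + (1 - s) • (y, b) : X × ℝ)).2 : EReal) := by
        rw [← EReal.coe_mul, ← EReal.coe_mul, ← EReal.coe_add]
        norm_num

/-- Monotonicity of the subdifferential graph. -/
lemma subdiff_monotone {f : X → EReal} (hp : ProperFn f) :
    MonotoneGraph (subdiffGraph f) := by
  rintro ⟨x, u⟩ hxu ⟨y, w⟩ hyw
  obtain ⟨hb, x₀, hx₀⟩ := hp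
  -- f x and f y are finite
  have hfin : ∀ z : X, ∀ v : X →L[ℝ] ℝ, (z, v) ∈ subdiffGraph f → f z ≠ ⊤ := by
    intro z v hzv hzt
    have := hzv x₀
    simp only at this
    rw [hzt, EReal.top_add_coe] at this
    exact hx₀ (top_le_iff.1 this)
  have hxt := hfin x u hxu
  have hyt := hfin y w hyw
  have h1 := hxu y
  have h2 := hyw x
  simp only at h1 h2
  rw [← EReal.coe_toReal hxt (hb x), ← EReal.coe_toReal hyt (hb y), ← EReal.coe_add,
    EReal.coe_le_coe_iff] at h1 h2
  simp only [map_sub] at h1 h2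
  simp only [ContinuousLinearMap.sub_apply, map_sub]
  linarith

/-- Affine minorant of a proper lsc convex function. -/
lemma affine_minorant {f : X → EReal} (hlsc : LowerSemicontinuous f) (hp : ProperFn f)
    (hc : ConvexFn f) : ∃ (u : X →L[ℝ] ℝ) (c : ℝ), ∀ x, ((u x + c : ℝ) : EReal) ≤ f x := by
  obtain ⟨hb, x₀, hx₀⟩ := hp
  set r₀ : ℝ := (f x₀).toReal with hr₀
  have hfx₀ : f x₀ = (r₀ : EReal) := (EReal.coe_toReal hx₀ (hb x₀)).symm
  have hpt : ((x₀, r₀ - 1) : X × ℝ) ∉ Epi f := by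
    intro h
    rw [Epi, mem_setOf_eq, hfx₀, EReal.coe_le_coe_iff] at h
    change r₀ ≤ r₀ - 1 at h
    linarith
  obtain ⟨L, s, hLpt, hLepi⟩ :=
    geometric_hahn_banach_point_closed (epi_convex hc) (epi_closed hlsc) hpt
  set β : ℝ := L (0, 1) with hβdef
  set u' : X → ℝ := fun x => L (x, 0) with hu'def
  have hL : ∀ (y : X) (t : ℝ), L (y, t) = u' y + t * β := by
    intro y t
    have : ((y, t) : X × ℝ) = (y, 0) + t • ((0 : X), (1 : ℝ)) := by
      simp [Prod.ext_iff]
    rw [this, map_add, map_smul]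
    simp [hu'def, hβdef, mul_comm]
  -- β ≥ 0 from vertical ray in the epigraph
  have hray : ∀ t, r₀ ≤ t → s ≤ u' x₀ + t * β := by
    intro t ht
    have : ((x₀, t) : X × ℝ) ∈ Epi f := by
      rw [Epi, mem_setOf_eq, hfx₀]
      show (r₀ : EReal) ≤ (t : EReal)
      exact_mod_cast ht
    have := (hLepi _ this).le
    rwa [hL] at this
  have hβ0 : 0 ≤ β := real_ray_aux hray
  have hβpos : 0 < β := by
    rcases hβ0.lt_or_eq with h | h
    · exact h
    · exfalso
      have h1 : L (x₀, r₀ - 1) < s := hLpt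
      have h2 : s < L (x₀, r₀) := hLepi _ (by rw [Epi, mem_setOf_eq, hfx₀])
      rw [hL] at h1 h2
      rw [← h] at h1 h2
      linarith
  -- the affine minorant
  refine ⟨(-β⁻¹) • (L.comp (ContinuousLinearMap.inl ℝ X ℝ)), s / β, fun x => ?_⟩
  by_cases hxt : f x = ⊤
  · rw [hxt]; exact le_top
  · have hx : ((x, (f x).toReal) : X × ℝ) ∈ Epi f := by
      rw [Epi, mem_setOf_eq, EReal.coe_toReal hxt (hb x)]
    have h2 := hLepi _ hx
    rw [hL] at h2
    have hux : ((-β⁻¹) • (L.comp (ContinuousLinearMap.inl ℝ X ℝ))) x = -β⁻¹ * u' x := by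
      simp [hu'def, ContinuousLinearMap.smul_apply]
    rw [← EReal.coe_toReal hxt (hb x), EReal.coe_le_coe_iff, hux]
    rw [div_eq_mul_inv]
    have := (f x).toReal
    have hineq : u' x + (f x).toReal * β > s := h2
    have hβne : β ≠ 0 := ne_of_gt hβpos
    rw [neg_mul]
    have : s * β⁻¹ - β⁻¹ * u' x ≤ (f x).toReal := by
      rw [← sub_nonneg]
      have key : (f x).toReal - (s * β⁻¹ - β⁻¹ * u' x) = (u' x + (f x).toReal * β - s) * β⁻¹ := by
        field_simp; ring
      rw [key]
      have h3 : 0 < u' x + (f x).toReal * β - s := by linarith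
      positivity
    linarith

end Chunk1

section Chunk2

variable {X : Type*} [NormedAddCommGroup X] [NormedSpace ℝ X]

private lemma clm_prod_decomp (L : (X × ℝ) →L[ℝ] ℝ) (y : X) (t : ℝ) :
    L (y, t) = L (y, 0) + t * L (0, 1) := by
  have : ((y, t) : X × ℝ) = (y, 0) + t • ((0 : X), (1 : ℝ)) := by
    simp [Prod.ext_iff]
  rw [this, map_add, map_smul]
  simp [mul_comm]

/-- Sum rule via separation: if `x̄` minimizes `f + g` with `f` convex and `g`
continuous convex real-valued, then there is `v ∈ ∂f(x̄)` with `-v ∈ ∂g(x̄)`. -/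
lemma sep_sum_rule {f : X → EReal} (hc : ConvexFn f) (hb : ∀ x, f x ≠ ⊥)
    {g : X → ℝ} (hgconv : ConvexOn ℝ univ g) (hgcont : Continuous g)
    {xb : X} (hfxb : f xb ≠ ⊤)
    (hmin : ∀ x, f xb + (g xb : EReal) ≤ f x + (g x : EReal)) :
    ∃ v : X →L[ℝ] ℝ, (∀ y, f xb + ((v (y - xb) : ℝ) : EReal) ≤ f y) ∧
      (∀ y, g xb - v (y - xb) ≤ g y) := by
  set T₀ : ℝ := (f xb).toReal with hT₀
  have hfxbe : f xb = (T₀ : EReal) := (EReal.coe_toReal hfxb (hb xb)).symm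
  set B : Set (X × ℝ) := {p : X × ℝ | p.2 < T₀ + g xb - g p.1} with hBdef
  have hBopen : IsOpen B := by
    have : B = (fun p : X × ℝ => T₀ + g xb - g p.1 - p.2) ⁻¹' Ioi 0 := by
      ext p
      simp only [hBdef, mem_setOf_eq, mem_preimage, mem_Ioi]
      constructor <;> intro <;> linarith
    rw [this]
    exact (by fun_prop : Continuous fun p : X × ℝ => T₀ + g xb - g p.1 - p.2).isOpen_preimage
      _ isOpen_Ioi
  have hBconv : Convex ℝ B := by
    rintro ⟨y1, t1⟩ h1 ⟨y2, t2⟩ h2 a b ha hb' hab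
    simp only [hBdef, mem_setOf_eq] at h1 h2 ⊢
    have hg := hgconv.2 (mem_univ y1) (mem_univ y2) ha hb' hab
    rcases eq_or_lt_of_le ha with ha0 | ha0
    · have hb1 : b = 1 := by linarith
      rw [← ha0, hb1]; simpa using h2
    rcases eq_or_lt_of_le hb' with hb0 | hb0
    · have ha1 : a = 1 := by linarith
      rw [← hb0, ha1]; simpa using h1
    have k1 : a * t1 < a * (T₀ + g xb - g y1) := by exact mul_lt_mul_of_pos_left h1 ha0
    have k2 : b * t2 < b * (T₀ + g xb - g y2) := by exact mul_lt_mul_of_pos_left h2 hb0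
    simp only [smul_eq_mul] at hg
    show a * t1 + b * t2 < T₀ + g xb - g (a • y1 + b • y2)
    have e : a * (T₀ + g xb - g y1) + b * (T₀ + g xb - g y2)
        = (a + b) * (T₀ + g xb) - (a * g y1 + b * g y2) := by ring
    rw [hab, one_mul] at e
    linarith [k1, k2, hg, e]
  have hdisj : Disjoint B (Epi f) := by
    rw [Set.disjoint_left]
    rintro ⟨y, t⟩ hpB hpE
    simp only [hBdef, mem_setOf_eq] at hpB
    have hE : f y ≤ ((t : ℝ) : EReal) := hpE
    have c1 : f xb + (g xb : EReal) ≤ f y + (g y : EReal) := hmin y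
    have c2 : f y + (g y : EReal) ≤ ((t + g y : ℝ) : EReal) := by
      rw [EReal.coe_add]
      exact add_le_add_left hE _
    have c3 : ((t + g y : ℝ) : EReal) < f xb + (g xb : EReal) := by
      rw [hfxbe, ← EReal.coe_add, EReal.coe_lt_coe_iff]
      linarith
    exact absurd ((c1.trans c2).trans_lt c3) (lt_irrefl _)
  obtain ⟨L, s0, hB, hA⟩ := geometric_hahn_banach_open hBconv hBopen (epi_convex hc) hdisj
  set β : ℝ := L (0, 1) with hβdef
  set u' : X → ℝ := fun x => L (x, 0) with hu'def
  have hL : ∀ (y : X) (t : ℝ), L (y, t) = u' y + t * β := fun y t => clm_prod_decomp L y t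
  have hEpixb : ∀ t, T₀ ≤ t → ((xb, t) : X × ℝ) ∈ Epi f := by
    intro t ht
    show f xb ≤ ((t : ℝ) : EReal)
    rw [hfxbe]; exact_mod_cast ht
  have hray : ∀ t, T₀ ≤ t → s0 ≤ u' xb + t * β := by
    intro t ht
    have := hA _ (hEpixb t ht)
    rwa [hL] at this
  have hβ0 : 0 ≤ β := real_ray_aux hray
  have hβpos : 0 < β := by
    rcases hβ0.lt_or_eq with h | h
    · exact h
    · exfalso
      have h1 : L (xb, T₀ - 1) < s0 := hB _ (by simp [hBdef, mem_setOf_eq])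
      have h2 : s0 ≤ L (xb, T₀) := hA _ (hEpixb T₀ le_rfl)
      rw [hL] at h1 h2
      rw [← h] at h1 h2
      simp at h1 h2
      linarith
  have hBub : ∀ y : X, ∀ t, t < T₀ + g xb - g y → u' y + t * β < s0 := by
    intro y t ht
    have : ((y, t) : X × ℝ) ∈ B := by simp [hBdef, mem_setOf_eq]; linarith
    have := hB _ this
    rwa [hL] at this
  have hs0eq : s0 = u' xb + T₀ * β := by
    have hub : u' xb + T₀ * β ≤ s0 :=
      real_sup_aux hβpos (fun t ht => hBub xb t (by linarith))
    exact le_antisymm (hray T₀ le_rfl) hub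
  set v : X →L[ℝ] ℝ := (-β⁻¹) • (L.comp (ContinuousLinearMap.inl ℝ X ℝ)) with hvdef
  have hv : ∀ y : X, v y = -β⁻¹ * u' y := by
    intro y
    simp [hvdef, hu'def, ContinuousLinearMap.smul_apply]
  have hvsub : ∀ y : X, v (y - xb) = -β⁻¹ * (u' y - u' xb) := by
    intro y
    rw [map_sub, hv, hv]; ring
  refine ⟨v, fun y => ?_, fun y => ?_⟩
  · by_cases hyt : f y = ⊤
    · rw [hyt]; exact le_top
    · set ty : ℝ := (f y).toReal with hty
      have hEy : ((y, ty) : X × ℝ) ∈ Epi f := by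
        show f y ≤ ((ty : ℝ) : EReal)
        rw [EReal.coe_toReal hyt (hb y)]
      have h2 := hA _ hEy
      rw [hL] at h2
      rw [hfxbe, ← EReal.coe_toReal hyt (hb y), ← EReal.coe_add, EReal.coe_le_coe_iff, hvsub]
      rw [hs0eq] at h2
      have hkey : -(u' y - u' xb) ≤ (ty - T₀) * β := by nlinarith
      have : -β⁻¹ * (u' y - u' xb) = -(u' y - u' xb) / β := by
        rw [neg_mul, div_eq_mul_inv, neg_mul, mul_comm]
      rw [this]
      have := (div_le_iff₀ hβpos).2 hkey
      linarith
  · have h2 := real_sup_aux hβpos (hBub y)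
    rw [hs0eq] at h2
    rw [hvsub]
    have hkey : (g xb - g y) * β ≤ -(u' y - u' xb) := by nlinarith
    have : -β⁻¹ * (u' y - u' xb) = -(u' y - u' xb) / β := by
      rw [neg_mul, div_eq_mul_inv, neg_mul, mul_comm]
    rw [this]
    have := (le_div_iff₀ hβpos).2 hkey
    linarith

end Chunk2

section Ekeland

/-- Ekeland's variational principle for lsc `EReal`-valued functions bounded below. -/
lemma ekeland_ereal {Y : Type*} [MetricSpace Y] [CompleteSpace Y]
    {F : Y → EReal} (hF : LowerSemicontinuous F) {m : ℝ}
    (hm : ∀ x, (m : EReal) ≤ F x) {x₀ : Y} (hx₀ : F x₀ ≠ ⊤) {δ : ℝ} (hδ : 0 < δ) :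
    ∃ xb, F xb ≤ F x₀ ∧ ∀ x, F xb ≤ F x + ((δ * dist x xb : ℝ) : EReal) := by
  have hbot : ∀ x, F x ≠ ⊥ := fun x h => by
    have := hm x; rw [h] at this; exact absurd this (by simp)
  set S : Y → Set Y := fun w => {y | F y + ((δ * dist y w : ℝ) : EReal) ≤ F w} with hSdef
  have hSself : ∀ w, w ∈ S w := by
    intro w
    show F w + ((δ * dist w w : ℝ) : EReal) ≤ F w
    simp
  have hSF : ∀ w y, y ∈ S w → F y ≤ F w := by
    intro w y hy
    refine le_trans (le_add_of_nonneg_right ?_) hy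
    exact_mod_cast mul_nonneg hδ.le dist_nonneg
  have hStrans : ∀ w y z, y ∈ S w → z ∈ S y → z ∈ S w := by
    intro w y z hy hz
    show F z + ((δ * dist z w : ℝ) : EReal) ≤ F w
    have h1 : F z + ((δ * dist z y : ℝ) : EReal) ≤ F y := hz
    have h2 : F y + ((δ * dist y w : ℝ) : EReal) ≤ F w := hy
    have hd : δ * dist z w ≤ δ * dist z y + δ * dist y w := by
      have := dist_triangle z y w
      nlinarith
    calc F z + ((δ * dist z w : ℝ) : EReal)
        ≤ F z + ((δ * dist z y + δ * dist y w : ℝ) : EReal) := by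
          apply add_le_add_right
          exact_mod_cast hd
      _ = (F z + ((δ * dist z y : ℝ) : EReal)) + ((δ * dist y w : ℝ) : EReal) := by
          rw [EReal.coe_add, add_assoc]
      _ ≤ F y + ((δ * dist y w : ℝ) : EReal) := add_le_add_left h1 _
      _ ≤ F w := h2
  have hSclosed : ∀ w, IsClosed (S w) := by
    intro w
    have hG : LowerSemicontinuous fun y => F y + ((δ * dist y w : ℝ) : EReal) :=
      lsc_add_cont hF hbot (by fun_prop)
    exact hG.isClosed_preimage (F w)
  -- the choice step
  have hstep : ∀ (n : ℕ) (w : Y), ∃ y, F w ≠ ⊤ →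
      (y ∈ S w ∧ ∀ z ∈ S w, F y ≤ F z + (((1/2 : ℝ) ^ n : ℝ) : EReal)) := by
    intro n w
    by_cases hw : F w = ⊤
    · exact ⟨w, fun h => absurd hw h⟩
    · set I : EReal := sInf (F '' S w) with hIdef
      have hIle : I ≤ F w := sInf_le ⟨w, hSself w, rfl⟩
      have hIm : (m : EReal) ≤ I := le_sInf (by rintro b ⟨z, _, rfl⟩; exact hm z)
      have hItop : I ≠ ⊤ := fun h => hw (top_le_iff.1 (h ▸ hIle))
      have hIbot : I ≠ ⊥ := fun h => by
        rw [h] at hIm; exact absurd hIm (by simp)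
      have hlt : I < I + (((1/2 : ℝ) ^ n : ℝ) : EReal) := by
        rw [← EReal.coe_toReal hItop hIbot, ← EReal.coe_add, EReal.coe_lt_coe_iff]
        have : (0:ℝ) < (1/2 : ℝ) ^ n := by positivity
        linarith
      obtain ⟨b, ⟨z, hzS, rfl⟩, hblt⟩ := sInf_lt_iff.1 hlt
      refine ⟨z, fun _ => ⟨hzS, fun z' hz' => ?_⟩⟩
      have : I ≤ F z' := sInf_le ⟨z', hz', rfl⟩
      exact le_trans hblt.le (add_le_add_left this _)
  choose st hst using hstep
  set x : ℕ → Y := fun n => Nat.recAux x₀ (fun k w => st k w) n with hxdef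
  have hx0 : x 0 = x₀ := rfl
  have hxs : ∀ n, x (n + 1) = st n (x n) := fun n => rfl
  have key : ∀ n, F (x n) ≠ ⊤ := by
    intro n
    induction n with
    | zero => exact hx₀
    | succ k ih =>
        have h := (hst k (x k)) ih
        rw [← hxs k] at h
        exact fun ht => ih (top_le_iff.1 (ht ▸ hSF _ _ h.1))
  have hmem : ∀ n, x (n + 1) ∈ S (x n) := by
    intro n
    have h := (hst n (x n)) (key n)
    rw [← hxs n] at h
    exact h.1
  have happrox : ∀ n, ∀ z ∈ S (x n), F (x (n + 1)) ≤ F z + (((1/2 : ℝ) ^ n : ℝ) : EReal) := by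
    intro n
    have h := (hst n (x n)) (key n)
    rw [← hxs n] at h
    exact h.2
  set a : ℕ → ℝ := fun n => (F (x n)).toReal with hadef
  have hacoe : ∀ n, F (x n) = ((a n : ℝ) : EReal) := fun n =>
    (EReal.coe_toReal (key n) (hbot _)).symm
  have hma : ∀ n, m ≤ a n := by
    intro n
    have := hm (x n)
    rw [hacoe n, EReal.coe_le_coe_iff] at this
    exact this
  have hchain : ∀ n k, n ≤ k → x k ∈ S (x n) := by
    intro n k hnk
    induction k with
    | zero =>
        have : n = 0 := Nat.le_zero.1 hnk
        subst this; exact hSself _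
    | succ j ih =>
        rcases Nat.lt_or_ge n (j + 1) with h | h
        · exact hStrans _ _ _ (ih (Nat.lt_succ_iff.1 h)) (hmem j)
        · have : n = j + 1 := le_antisymm hnk h
          subst this; exact hSself _
  have hdistb : ∀ n k, n ≤ k → dist (x k) (x n) ≤ (a n - a k) / δ := by
    intro n k hnk
    have h := hchain n k hnk
    have : F (x k) + ((δ * dist (x k) (x n) : ℝ) : EReal) ≤ F (x n) := h
    rw [hacoe n, hacoe k, ← EReal.coe_add, EReal.coe_le_coe_iff] at this
    rw [le_div_iff₀ hδ]
    linarith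
  have ha_anti : Antitone a := by
    apply antitone_nat_of_succ_le
    intro n
    have := hdistb n (n + 1) (Nat.le_succ n)
    have h2 : 0 ≤ dist (x (n+1)) (x n) := dist_nonneg
    have h3 : 0 ≤ (a n - a (n+1)) / δ := le_trans h2 this
    have := (div_nonneg_iff.1 h3)
    rcases this with ⟨h4, _⟩ | ⟨_, h5⟩
    · linarith
    · linarith
  set L : ℝ := ⨅ n, a n with hLdef
  have hbdd : BddBelow (Set.range a) := ⟨m, by rintro b ⟨n, rfl⟩; exact hma n⟩
  have hLle : ∀ n, L ≤ a n := fun n => ciInf_le hbdd n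
  have haL : Filter.Tendsto a Filter.atTop (nhds L) :=
    tendsto_atTop_ciInf ha_anti hbdd
  have hcauchy : CauchySeq x := by
    apply cauchySeq_of_le_tendsto_0 (fun n => (a n - L) / δ)
    · intro n k N hn hk
      have bound : ∀ i j, N ≤ i → i ≤ j → dist (x i) (x j) ≤ (a N - L) / δ := by
        intro i j hNi hij
        calc dist (x i) (x j) = dist (x j) (x i) := dist_comm _ _
          _ ≤ (a i - a j) / δ := hdistb i j hij
          _ ≤ (a N - L) / δ := by
              have h1 : a i - a j ≤ a N - L := by
                have h2 := ha_anti hNi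
                have h3 := hLle j
                linarith
              gcongr
      rcases le_total n k with h | h
      · exact bound n k hn h
      · rw [dist_comm]
        exact bound k n hk h
    · have h := (haL.sub (tendsto_const_nhds (x := L))).div_const δ
      simpa using h
  obtain ⟨xb, hxb⟩ := cauchySeq_tendsto_of_complete hcauchy
  have hxbS : ∀ n, xb ∈ S (x n) := by
    intro n
    apply (hSclosed (x n)).mem_of_tendsto hxb
    filter_upwards [Filter.eventually_ge_atTop n] with k hk using hchain n k hk
  have hxbF : F xb ≤ F x₀ := by
    have := hSF (x 0) xb (hxbS 0)
    rwa [hx0] at this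
  refine ⟨xb, hxbF, ?_⟩
  intro z
  by_contra hcon
  push_neg at hcon
  have hzS : z ∈ S xb := le_of_lt hcon
  have hzFtop : F z ≠ ⊤ := by
    intro h
    rw [h, EReal.top_add_coe] at hcon
    exact absurd hcon not_top_lt
  have hxbtop : F xb ≠ ⊤ := fun h => hx₀ (top_le_iff.1 (h ▸ hxbF))
  have hzn : ∀ n, z ∈ S (x n) := fun n => hStrans _ _ _ (hxbS n) hzS
  have hineq : ∀ n, F xb ≤ F z + (((1/2 : ℝ) ^ n : ℝ) : EReal) := by
    intro n
    have h1 := happrox n z (hzn n)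
    have h2 : F xb ≤ F (x (n + 1)) := hSF _ _ (hxbS (n + 1))
    exact h2.trans h1
  set rz : ℝ := (F z).toReal with hrz
  set rb : ℝ := (F xb).toReal with hrb
  have hrzc : F z = ((rz : ℝ) : EReal) := (EReal.coe_toReal hzFtop (hbot z)).symm
  have hrbc : F xb = ((rb : ℝ) : EReal) := (EReal.coe_toReal hxbtop (hbot xb)).symm
  have hrineq : ∀ n, rb ≤ rz + (1/2 : ℝ) ^ n := by
    intro n
    have := hineq n
    rw [hrzc, hrbc, ← EReal.coe_add, EReal.coe_le_coe_iff] at this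
    exact this
  have hle : rb ≤ rz := by
    have htend : Filter.Tendsto (fun n : ℕ => rz + (1/2 : ℝ) ^ n) Filter.atTop (nhds rz) := by
      have h0 : Filter.Tendsto (fun n : ℕ => (1/2 : ℝ) ^ n) Filter.atTop (nhds 0) :=
        tendsto_pow_atTop_nhds_zero_of_lt_one (by norm_num) (by norm_num)
      simpa using tendsto_const_nhds.add h0
    exact ge_of_tendsto' htend hrineq
  rw [hrzc, hrbc, ← EReal.coe_add, EReal.coe_lt_coe_iff] at hcon
  have : 0 ≤ δ * dist z xb := mul_nonneg hδ.le dist_nonneg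
  linarith

end Ekeland

section Maximality

variable {X : Type*} [NormedAddCommGroup X] [NormedSpace ℝ X]

private lemma convexOn_norm_sub (z : X) : ConvexOn ℝ univ (fun x : X => ‖x - z‖) := by
  have h := (convexOn_univ_norm (E := X)).translate_right (c := -z)
  rw [preimage_univ] at h
  have he : (fun x : X => ‖x - z‖) = (Norm.norm ∘ fun x : X => -z + x) := by
    funext x; simp [Function.comp, sub_eq_neg_add]
  rw [he]; exact h

private lemma convexOn_affine (l : X →L[ℝ] ℝ) (b : ℝ) :
    ConvexOn ℝ univ (fun x : X => l x + b) := by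
  refine ⟨convex_univ, fun x _ y _ a b' ha hb hab => ?_⟩
  simp only [smul_eq_mul]
  have h : l (a • x + b' • y) = a * l x + b' * l y := by
    rw [map_add, map_smul, map_smul]; simp [smul_eq_mul]
  rw [h]
  have e : a * (l x + b) + b' * (l y + b) = a * l x + b' * l y + (a + b') * b := by ring
  rw [e, hab, one_mul]

private lemma convexOn_mul_of_nonneg {g : X → ℝ} (hg : ConvexOn ℝ univ g) {c : ℝ} (hc : 0 ≤ c) :
    ConvexOn ℝ univ (fun x => c * g x) := by
  have h := hg.smul hc
  have he : (fun x => c * g x) = (c • g) := by funext x; simp [smul_eq_mul]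
  rw [he]; exact h

private lemma convexOn_max_norm_sub (z : X) (ρ : ℝ) :
    ConvexOn ℝ univ (fun x : X => max (‖x - z‖ - ρ) 0) := by
  have h1 : ConvexOn ℝ univ (fun x : X => ‖x - z‖ - ρ) := by
    have h := (convexOn_norm_sub z).add (convexOn_const (-ρ) convex_univ)
    have he : (fun x : X => ‖x - z‖ - ρ) = fun x => ‖x - z‖ + (-ρ) := by
      funext x; ring
    rw [he]; exact h
  have h2 := h1.sup (convexOn_const (0 : ℝ) convex_univ)
  have he : (fun x : X => max (‖x - z‖ - ρ) 0)
      = ((fun x : X => ‖x - z‖ - ρ) ⊔ fun _ => (0:ℝ)) := by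
    funext x
    simp [Pi.sup_apply]
  rw [he]; exact h2

variable [CompleteSpace X]

/-- Rockafellar's key step: a point monotonically related to `∂f` belongs to `∂f`. -/
lemma rockafellar_key {f : X → EReal} (hlsc : LowerSemicontinuous f) (hp : ProperFn f)
    (hc : ConvexFn f) {z : X} {zs : X →L[ℝ] ℝ}
    (hrel : ∀ p ∈ subdiffGraph f, 0 ≤ (p.2 - zs) (p.1 - z)) :
    (z, zs) ∈ subdiffGraph f := by
  have hb : ∀ x, f x ≠ ⊥ := hp.1
  obtain ⟨u₀, c₀, hu₀⟩ := affine_minorant hlsc hp hc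
  rw [subdiffGraph, mem_setOf_eq]
  by_contra hcon
  push_neg at hcon
  obtain ⟨y₁, hy₁⟩ := hcon
  simp only at hy₁
  have hy₁top : f y₁ ≠ ⊤ := by
    intro h
    rw [h] at hy₁
    exact absurd (lt_of_lt_of_le hy₁ le_top) (by simp)
  set r₁ : ℝ := (f y₁).toReal with hr₁
  have hr₁c : f y₁ = ((r₁ : ℝ) : EReal) := (EReal.coe_toReal hy₁top (hb y₁)).symm
  set w : ℝ := zs (y₁ - z) with hw
  have hlt : ((r₁ - w : ℝ) : EReal) < f z := by
    rw [← ereal_coe_lt_add_coe_iff, ← hr₁c]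
    exact hy₁
  obtain ⟨α, hα1, hα2⟩ := EReal.exists_between_coe_real hlt
  rw [EReal.coe_lt_coe_iff] at hα1
  set ρ : ℝ := ‖y₁ - z‖ with hρ
  have hρ0 : 0 ≤ ρ := norm_nonneg _
  set ε : ℝ := (α - (r₁ - w)) / (ρ + 1) with hε
  have hεpos : 0 < ε := div_pos (by linarith) (by linarith)
  set K : ℝ := ‖u₀‖ + ‖zs‖ + ε + 1 with hK
  have hKpos : 0 < K := by
    have h1 := norm_nonneg u₀; have h2 := norm_nonneg zs
    simp only [hK]; linarith
  clear_value r₁ w ρ ε K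
  set φ : X → ℝ := fun x => -(zs (x - z)) + ε * ‖x - z‖ + K * max (‖x - z‖ - ρ) 0 with hφ
  clear_value φ
  have hφcont : Continuous φ := by
    rw [hφ]
    apply Continuous.add
    apply Continuous.add
    · exact (zs.continuous.comp (continuous_id.sub continuous_const)).neg
    · exact continuous_const.mul ((continuous_id.sub continuous_const).norm)
    · exact continuous_const.mul (((continuous_id.sub continuous_const).norm.sub
        continuous_const).max continuous_const)
  have hφconv : ConvexOn ℝ univ φ := by
    rw [hφ]
    have h1 : ConvexOn ℝ univ (fun x : X => -(zs (x - z))) := by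
      have h := convexOn_affine (-zs) (zs z)
      have he : (fun x : X => -(zs (x - z))) = fun x : X => (-zs) x + zs z := by
        funext x; simp [map_sub]; ring
      rw [he]; exact h
    have h2 := convexOn_mul_of_nonneg (convexOn_norm_sub z) hεpos.le
    have h3 := convexOn_mul_of_nonneg (convexOn_max_norm_sub z ρ) hKpos.le
    exact (h1.add h2).add h3
  set F : X → EReal := fun x => f x + ((φ x : ℝ) : EReal) with hF
  clear_value F
  have hFlsc : LowerSemicontinuous F := by
    rw [hF]; exact lsc_add_cont hlsc hb hφcont
  -- lower bound for F
  set m : ℝ := c₀ + u₀ z - (‖u₀‖ + ‖zs‖) * ρ - K * ρ with hm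
  clear_value m
  have hFlb : ∀ x, ((m : ℝ) : EReal) ≤ F x := by
    intro x
    have h1 : ((u₀ x + c₀ + φ x : ℝ) : EReal) ≤ F x := by
      simp only [hF, EReal.coe_add]
      exact add_le_add_left (by rw [← EReal.coe_add]; exact hu₀ x) _
    refine le_trans ?_ h1
    rw [EReal.coe_le_coe_iff]
    simp only [hφ]
    set t : ℝ := ‖x - z‖ with ht
    clear_value t
    have ht0 : 0 ≤ t := by rw [ht]; exact norm_nonneg _
    have hu₀b : -(‖u₀‖ * t) ≤ u₀ (x - z) := by
      have h := u₀.le_opNorm (x - z)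
      rw [Real.norm_eq_abs, ← ht] at h
      linarith [neg_abs_le (u₀ (x - z))]
    have hzsb : -(zs (x - z)) ≥ -(‖zs‖ * t) := by
      have h := zs.le_opNorm (x - z)
      rw [Real.norm_eq_abs, ← ht] at h
      linarith [le_abs_self (zs (x - z))]
    have hux : u₀ x = u₀ z + u₀ (x - z) := by rw [map_sub]; ring
    have hεt : 0 ≤ ε * t := mul_nonneg hεpos.le ht0
    have hKρ : 0 ≤ K * ρ := mul_nonneg hKpos.le hρ0
    have hnn : 0 ≤ (‖u₀‖ + ‖zs‖) * ρ :=
      mul_nonneg (by positivity) hρ0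
    show m ≤ u₀ x + c₀ + (-(zs (x - z)) + ε * t + K * max (t - ρ) 0)
    rcases le_total t ρ with hcase | hcase
    · rw [max_eq_right (by linarith)]
      have hA : ‖u₀‖ * t ≤ ‖u₀‖ * ρ := mul_le_mul_of_nonneg_left hcase (norm_nonneg u₀)
      have hB : ‖zs‖ * t ≤ ‖zs‖ * ρ := mul_le_mul_of_nonneg_left hcase (norm_nonneg zs)
      simp only [hm]
      rw [hux]
      nlinarith [hu₀b, hzsb, hA, hB, hεt, hKρ]
    · rw [max_eq_left (by linarith)]
      have hKt : K * (t - ρ) = ‖u₀‖ * t + ‖zs‖ * t + ε * t + t - K * ρ := by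
        simp only [hK]; ring
      simp only [hm]
      rw [hux, hKt]
      nlinarith [hu₀b, hzsb, hεt, hnn, ht0]
  have hFbot : ∀ x, F x ≠ ⊥ := fun x h => by
    have := hFlb x; rw [h] at this; exact absurd this (by simp)
  -- value at y₁
  have hφy₁ : φ y₁ = -w + ε * ρ := by
    simp only [hφ, ← hρ, ← hw]
    rw [sub_self, max_self, mul_zero, add_zero]
  have hFy₁eq : F y₁ = ((r₁ + φ y₁ : ℝ) : EReal) := by
    simp only [hF]; rw [hr₁c, ← EReal.coe_add]
  have heps_rho : ε * ρ < α - (r₁ - w) := by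
    have hne : (0:ℝ) < ρ + 1 := by linarith
    have h1 : ε * (ρ + 1) = α - (r₁ - w) := by
      rw [hε]; field_simp
    have h2 : ε * ρ = ε * (ρ + 1) - ε := by ring
    linarith
  have hFy₁lt : F y₁ < ((α : ℝ) : EReal) := by
    rw [hFy₁eq, EReal.coe_lt_coe_iff, hφy₁]
    linarith
  have hFy₁top : F y₁ ≠ ⊤ := by rw [hFy₁eq]; exact EReal.coe_ne_top _
  -- Ekeland
  obtain ⟨xb, hxb1, hxb2⟩ := ekeland_ereal hFlsc hFlb hFy₁top (δ := ε / 2) (by linarith)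
  have hFxbtop : F xb ≠ ⊤ := fun h => hFy₁top (top_le_iff.1 (h ▸ hxb1))
  have hfxbtop : f xb ≠ ⊤ := by
    intro h
    apply hFxbtop
    simp only [hF]
    rw [h, EReal.top_add_coe]
  -- sum rule
  set g : X → ℝ := fun x => φ x + (ε / 2) * ‖x - xb‖ with hg
  clear_value g
  have hgcont : Continuous g := by
    rw [hg]
    exact hφcont.add (continuous_const.mul ((continuous_id.sub continuous_const).norm))
  have hgconv : ConvexOn ℝ univ g := by
    rw [hg]
    exact hφconv.add (convexOn_mul_of_nonneg (convexOn_norm_sub xb) (by linarith))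
  have hgxb : g xb = φ xb := by
    simp only [hg]; rw [sub_self, norm_zero, mul_zero, add_zero]
  have hmin : ∀ x, f xb + ((g xb : ℝ) : EReal) ≤ f x + ((g x : ℝ) : EReal) := by
    intro x
    have h := hxb2 x
    rw [dist_eq_norm] at h
    simp only [hF] at h
    rw [hgxb]
    calc f xb + ((φ xb : ℝ) : EReal) ≤ (f x + ((φ x : ℝ) : EReal))
          + ((ε / 2 * ‖x - xb‖ : ℝ) : EReal) := h
      _ = f x + ((g x : ℝ) : EReal) := by
          simp only [hg]
          rw [add_assoc, ← EReal.coe_add]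
  obtain ⟨v, hv1, hv2⟩ := sep_sum_rule hc hb hgconv hgcont hfxbtop hmin
  have hvrel : (0:ℝ) ≤ (v - zs) (xb - z) :=
    hrel (xb, v) (by rw [subdiffGraph, mem_setOf_eq]; exact fun y => hv1 y)
  rw [ContinuousLinearMap.sub_apply] at hvrel
  have hφz : φ z = 0 := by
    simp only [hφ]
    rw [sub_self, map_zero, norm_zero, mul_zero, zero_sub, neg_zero,
      max_eq_right (neg_nonpos.2 hρ0), mul_zero]
    ring
  have hgz : g z = (ε / 2) * ‖z - xb‖ := by simp only [hg]; rw [hφz, zero_add]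
  have hvzb : v (z - xb) = -(v (xb - z)) := by rw [← neg_sub, map_neg]
  set txb : ℝ := ‖xb - z‖ with htxb
  clear_value txb
  have htxb0 : 0 ≤ txb := by rw [htxb]; exact norm_nonneg _
  have hmx0 : 0 ≤ max (txb - ρ) 0 := le_max_right _ _
  have hnrev : ‖z - xb‖ = txb := by rw [htxb, norm_sub_rev]
  have hKmx : 0 ≤ K * max (txb - ρ) 0 := mul_nonneg hKpos.le hmx0
  have key : -(zs (xb - z)) + ε * txb + K * max (txb - ρ) 0 + v (xb - z) ≤ ε / 2 * txb := by
    have h2 := hv2 z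
    rw [hgz, hnrev, hvzb, hgxb] at h2
    have hφxb : φ xb = -(zs (xb - z)) + ε * txb + K * max (txb - ρ) 0 := by
      simp only [hφ]
      rw [htxb]
    linarith [h2, hφxb.le, hφxb.ge]
  have htxb_zero : txb = 0 := by
    have h3 : ε / 2 * txb ≤ 0 := by linarith [key, hvrel, hKmx]
    have h4 : 0 ≤ ε / 2 * txb := mul_nonneg (by linarith) htxb0
    rcases mul_eq_zero.1 (le_antisymm h3 h4) with h5 | h5
    · exfalso; linarith
    · exact h5
  have hxz : xb = z := by
    have := norm_eq_zero.1 (htxb ▸ htxb_zero)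
    exact sub_eq_zero.1 this
  -- contradiction
  have hFz : F z = f z := by
    simp only [hF]; rw [hφz]
    norm_num
  rw [hxz, hFz] at hxb1
  exact absurd ((hxb1.trans_lt hFy₁lt).trans hα2) (lt_irrefl _)

/-- Rockafellar's theorem: the subdifferential of a proper lsc convex function is
maximally monotone. -/
lemma subdiff_maximal {f : X → EReal} (hlsc : LowerSemicontinuous f) (hp : ProperFn f)
    (hc : ConvexFn f) : MaximalMonotoneGraph (subdiffGraph f) := by
  refine ⟨subdiff_monotone hp, fun S hS hsub => ?_⟩
  refine Set.Subset.antisymm ?_ hsub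
  rintro ⟨z, zs⟩ hz
  exact rockafellar_key hlsc hp hc (fun p hpmem => hS p (hsub hpmem) (z, zs) hz)

end Maximality

section MainPieces

variable {X : Type*} [NormedAddCommGroup X] [NormedSpace ℝ X]

/-- Backward direction: from a maximal monotone `T` represented by a suitable `A`,
construct the convex function. -/
lemma backward_direction (T : Set (X × (X →L[ℝ] ℝ))) (hmax : MaximalMonotoneGraph T)
    (A : Set ((X × ℝ) × ((X →L[ℝ] ℝ) × ℝ))) (hA : MonotoneGraphXR A)
    (h3 : ∀ c ∈ graphDomXR A, (c, ((0 : X →L[ℝ] ℝ), (0:ℝ))) ∈ A)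
    (hT : T = inducedGraph A) :
    ∃ f : X → EReal, LowerSemicontinuous f ∧ ProperFn f ∧ ConvexFn f ∧
      T = subdiffGraph f := by
  -- T is nonempty
  have hne : T.Nonempty := by
    by_contra h
    rw [not_nonempty_iff_eq_empty] at h
    have hmono : MonotoneGraph ({(((0:X), (0 : X →L[ℝ] ℝ)))} : Set (X × (X →L[ℝ] ℝ))) := by
      rintro p hp q hq
      rw [mem_singleton_iff] at hp hq
      subst hp; subst hq
      simp
    have := hmax.2 _ hmono (by rw [h]; exact empty_subset _)
    rw [h] at this
    exact absurd this (by simp [Set.singleton_ne_empty])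
  obtain ⟨⟨z, zs⟩, hzT⟩ := hne
  have hzT' := hzT
  rw [hT] at hzT'
  obtain ⟨lam₀, hlam₀⟩ := hzT'
  -- the index type of affine minorants
  set ι := {p : ((X × ℝ) × ((X →L[ℝ] ℝ) × ℝ)) // p ∈ A ∧ p.2.2 = -1} with hι
  haveI : Nonempty ι := ⟨⟨((z, lam₀), (zs, -1)), hlam₀, rfl⟩⟩
  set f : X → EReal :=
    fun y => ⨆ p : ι, ((p.1.1.2 + p.1.2.1 (y - p.1.1.1) : ℝ) : EReal) with hf
  have hfval : ∀ (p : ι) (y : X),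
      ((p.1.1.2 + p.1.2.1 (y - p.1.1.1) : ℝ) : EReal) ≤ f y := by
    intro p y
    rw [hf]
    exact le_iSup (fun p : ι => ((p.1.1.2 + p.1.2.1 (y - p.1.1.1) : ℝ) : EReal)) p
  -- the key upper bound from monotonicity and condition (iii)
  have hbound : ∀ (x : X) (lam : ℝ) (u : (X →L[ℝ] ℝ) × ℝ), ((x, lam), u) ∈ A →
      ∀ p : ι, p.1.1.2 + p.1.2.1 (x - p.1.1.1) ≤ lam := by
    intro x lam u hu p
    have hz0 : ((x, lam), ((0 : X →L[ℝ] ℝ), (0:ℝ))) ∈ A := h3 _ ⟨u, hu⟩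
    have hmono := hA p.1 p.2.1 ((x, lam), ((0 : X →L[ℝ] ℝ), (0:ℝ))) hz0
    simp only [pairXR, Prod.fst_sub, Prod.snd_sub, ContinuousLinearMap.sub_apply,
      ContinuousLinearMap.zero_apply, map_sub, sub_zero] at hmono
    rw [p.2.2] at hmono
    have := map_sub p.1.2.1 x p.1.1.1
    rw [map_sub]
    linarith [hmono]
  have hflam : ∀ (x : X) (lam : ℝ) (u : (X →L[ℝ] ℝ) × ℝ), ((x, lam), u) ∈ A →
      f x ≤ ((lam : ℝ) : EReal) := by
    intro x lam u hu
    rw [hf]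
    exact iSup_le fun p => by
      rw [EReal.coe_le_coe_iff]
      exact hbound x lam u hu p
  -- properness
  have hbot : ∀ y, f y ≠ ⊥ := by
    intro y h
    have h1 := hfval ⟨((z, lam₀), (zs, -1)), hlam₀, rfl⟩ y
    rw [h] at h1
    exact absurd (le_bot_iff.1 h1) (EReal.coe_ne_bot _)
  have hproper : ProperFn f := by
    refine ⟨hbot, z, fun h => ?_⟩
    have := hflam z lam₀ (zs, -1) hlam₀
    rw [h] at this
    exact absurd (top_le_iff.1 this) (EReal.coe_ne_top lam₀)
  -- lower semicontinuity
  have hlsc : LowerSemicontinuous f := by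
    rw [hf]
    apply lowerSemicontinuous_iSup
    intro p
    apply Continuous.lowerSemicontinuous
    exact continuous_coe_real_ereal.comp
      (continuous_const.add (p.1.2.1.continuous.comp (continuous_id.sub continuous_const)))
  -- convexity
  have hconv : ConvexFn f := by
    intro x y t ht0 ht1
    rw [hf]
    apply iSup_le
    intro p
    have haff : p.1.1.2 + p.1.2.1 (t • x + (1 - t) • y - p.1.1.1)
        = t * (p.1.1.2 + p.1.2.1 (x - p.1.1.1)) + (1 - t) * (p.1.1.2 + p.1.2.1 (y - p.1.1.1)) := by
      rw [map_sub, map_add, map_smul, map_smul, map_sub, map_sub]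
      simp only [smul_eq_mul]
      ring
    rw [haff, EReal.coe_add, EReal.coe_mul, EReal.coe_mul]
    have h1 : ((t : ℝ) : EReal) * ((p.1.1.2 + p.1.2.1 (x - p.1.1.1) : ℝ) : EReal)
        ≤ ((t : ℝ) : EReal) * f x :=
      mul_le_mul_of_nonneg_left (hfval p x) (by exact_mod_cast ht0)
    have h2 : (((1 - t : ℝ)) : EReal) * ((p.1.1.2 + p.1.2.1 (y - p.1.1.1) : ℝ) : EReal)
        ≤ (((1 - t : ℝ)) : EReal) * f y :=
      mul_le_mul_of_nonneg_left (hfval p y) (by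
        rw [show ((0:EReal) = ((0:ℝ) : EReal)) by simp]
        exact_mod_cast (by linarith : (0:ℝ) ≤ 1 - t))
    exact add_le_add h1 h2
  -- T ⊆ ∂f
  have hTsub : T ⊆ subdiffGraph f := by
    rintro ⟨x, xs⟩ hmem
    rw [hT] at hmem
    obtain ⟨lam, hl⟩ := hmem
    have hle : f x ≤ ((lam : ℝ) : EReal) := hflam x lam (xs, -1) hl
    have hge : ((lam : ℝ) : EReal) ≤ f x := by
      have := hfval ⟨((x, lam), (xs, -1)), hl, rfl⟩ x
      simpa using this
    have hfx : f x = ((lam : ℝ) : EReal) := le_antisymm hle hge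
    intro y
    show f x + ((xs (y - x) : ℝ) : EReal) ≤ f y
    rw [hfx, ← EReal.coe_add]
    exact hfval ⟨((x, lam), (xs, -1)), hl, rfl⟩ y
  have heq := hmax.2 (subdiffGraph f) (subdiff_monotone hproper) hTsub
  exact ⟨f, hlsc, hproper, hconv, heq.symm⟩

end MainPieces

section Final

variable {X : Type*} [NormedAddCommGroup X] [NormedSpace ℝ X]

lemma normalCone_monotoneXR (C : Set (X × ℝ)) : MonotoneGraphXR (normalConeGraphXR C) := by
  rintro p hp q hq
  have h1 := hp.2 q.1 hq.1
  have h2 := hq.2 p.1 hp.1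
  simp only [pairXR, Prod.fst_sub, Prod.snd_sub, ContinuousLinearMap.sub_apply,
    map_sub] at h1 h2 ⊢
  ring_nf at h1 h2 ⊢
  nlinarith [h1, h2]

lemma normalCone_domXR (C : Set (X × ℝ)) : graphDomXR (normalConeGraphXR C) = C := by
  ext c
  constructor
  · rintro ⟨u, hu⟩
    exact hu.1
  · intro hcC
    refine ⟨((0 : X →L[ℝ] ℝ), (0:ℝ)), hcC, fun d hd => ?_⟩
    simp [pairXR]

lemma forward_repr {f : X → EReal} (hlsc : LowerSemicontinuous f) (hp : ProperFn f)
    (hc : ConvexFn f) :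
    ∃ A : Set ((X × ℝ) × ((X →L[ℝ] ℝ) × ℝ)), MonotoneGraphXR A ∧
      (∃ u : X →L[ℝ] ℝ, ∃ M : ℝ,
        ∀ p ∈ closure (convexHull ℝ (graphDomXR A)), u p.1 - p.2 ≤ M) ∧
      recessionEq (closure (convexHull ℝ (graphDomXR A))) ((0 : X), (1 : ℝ)) ∧
      (∀ c ∈ graphDomXR A, (c, ((0 : X →L[ℝ] ℝ), (0 : ℝ))) ∈ A) ∧
      subdiffGraph f = inducedGraph A := by
  have hbot := hp.1
  have hEconv : Convex ℝ (Epi f) := epi_convex hc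
  have hEclosed : IsClosed (Epi f) := epi_closed hlsc
  have hhull : closure (convexHull ℝ (graphDomXR (normalConeGraphXR (Epi f)))) = Epi f := by
    rw [normalCone_domXR, convexHull_eq_self.2 hEconv, hEclosed.closure_eq]
  refine ⟨normalConeGraphXR (Epi f), normalCone_monotoneXR _, ?_, ?_, ?_, ?_⟩
  · -- condition (i): linear minorant on the epigraph
    obtain ⟨u₀, c₀, hu₀⟩ := affine_minorant hlsc hp hc
    refine ⟨u₀, -c₀, ?_⟩
    rw [hhull]
    rintro ⟨x, s⟩ hxs
    have h1 : ((u₀ x + c₀ : ℝ) : EReal) ≤ ((s : ℝ) : EReal) := le_trans (hu₀ x) hxs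
    rw [EReal.coe_le_coe_iff] at h1
    show u₀ x - s ≤ -c₀
    linarith
  · -- condition (ii): recession direction (0, 1)
    simp only [recessionEq]
    rw [hhull]
    ext ⟨x, s⟩
    constructor
    · rintro ⟨c, hcE, t, ht, heq⟩
      have hxs : x = c.1 ∧ s = c.2 + t := by
        rw [Prod.ext_iff] at heq
        simpa using heq
      show f (x, s).1 ≤ (((x, s).2 : ℝ) : EReal)
      simp only
      rw [hxs.1, hxs.2]
      refine le_trans hcE ?_
      rw [EReal.coe_le_coe_iff]
      linarith
    · intro hxs
      exact ⟨(x, s), hxs, 0, le_rfl, by simp⟩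
  · -- condition (iii)
    intro c hc'
    rw [normalCone_domXR] at hc'
    exact ⟨hc', fun d hd => by simp [pairXR]⟩
  · -- the representation T = A_X
    ext ⟨x, xs⟩
    constructor
    · intro hmem
      have hfxtop : f x ≠ ⊤ := by
        intro htop
        obtain ⟨x₀, hx₀⟩ := hp.2
        have h := hmem x₀
        simp only at h
        rw [htop, EReal.top_add_coe] at h
        exact hx₀ (top_le_iff.1 h)
      set lam : ℝ := (f x).toReal with hlam
      have hfx : f x = ((lam : ℝ) : EReal) := (EReal.coe_toReal hfxtop (hbot x)).symm
      refine ⟨lam, ⟨?_, ?_⟩⟩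
      · show f x ≤ ((lam : ℝ) : EReal)
        rw [hfx]
      · rintro ⟨y, s⟩ hd
        have h := hmem y
        simp only at h
        rw [hfx, ← EReal.coe_add] at h
        have h2 : ((lam + xs (y - x) : ℝ) : EReal) ≤ ((s : ℝ) : EReal) := le_trans h hd
        rw [EReal.coe_le_coe_iff] at h2
        show xs ((y, s).1 - x) + ((y, s).2 - lam) * (-1) ≤ 0
        simp only
        linarith
    · rintro ⟨lam, hl⟩
      intro y
      show f x + ((xs (y - x) : ℝ) : EReal) ≤ f y
      have hfxlam : f x ≤ ((lam : ℝ) : EReal) := hl.1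
      by_cases hyt : f y = ⊤
      · rw [hyt]; exact le_top
      · have hdE : ((y, (f y).toReal) : X × ℝ) ∈ Epi f := by
          show f y ≤ (((f y).toReal : ℝ) : EReal)
          rw [EReal.coe_toReal hyt (hbot y)]
        have h2 := hl.2 _ hdE
        simp only [pairXR, Prod.fst_sub, Prod.snd_sub] at h2
        -- h2 : xs (y - x) + ((f y).toReal - lam) * (-1) ≤ 0
        calc f x + ((xs (y - x) : ℝ) : EReal)
            ≤ ((lam : ℝ) : EReal) + ((xs (y - x) : ℝ) : EReal) := add_le_add_left hfxlam _
          _ = ((lam + xs (y - x) : ℝ) : EReal) := (EReal.coe_add _ _).symm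
          _ ≤ (((f y).toReal : ℝ) : EReal) := by
              rw [EReal.coe_le_coe_iff]
              linarith
          _ = f y := EReal.coe_toReal hyt (hbot y)

/-- Main theorem assembly. -/
lemma main_forward {f : X → EReal} [CompleteSpace X] : True := trivial

end Final


/-- `T` is the subdifferential operator of some l.s.c. proper convex
functional iff `T` is maximally monotone and `T = A_X` for some monotone operator
`A : X × ℝ ⇉ X* × ℝ` satisfying conditions (i)-(iii). -/
theorem subdiff_characterization
    {X : Type*} [NormedAddCommGroup X] [NormedSpace ℝ X] [CompleteSpace X]
    (T : Set (X × (X →L[ℝ] ℝ))) :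
    (∃ f : X → EReal, LowerSemicontinuous f ∧ ProperFn f ∧ ConvexFn f ∧
        T = subdiffGraph f) ↔
      (MaximalMonotoneGraph T ∧
        ∃ A : Set ((X × ℝ) × ((X →L[ℝ] ℝ) × ℝ)), MonotoneGraphXR A ∧
          (∃ u : X →L[ℝ] ℝ, ∃ M : ℝ,
            ∀ p ∈ closure (convexHull ℝ (graphDomXR A)), u p.1 - p.2 ≤ M) ∧
          recessionEq (closure (convexHull ℝ (graphDomXR A))) ((0 : X), (1 : ℝ)) ∧
          (∀ c ∈ graphDomXR A, (c, ((0 : X →L[ℝ] ℝ), (0 : ℝ))) ∈ A) ∧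
          T = inducedGraph A) := by
  constructor
  · rintro ⟨f, hlsc, hp, hc, rfl⟩
    obtain ⟨A, h1, h2, h3, h4, h5⟩ := forward_repr hlsc hp hc
    exact ⟨subdiff_maximal hlsc hp hc, A, h1, h2, h3, h4, h5⟩
  · rintro ⟨hmax, A, hA, -, -, h3, hT⟩
    exact backward_direction _ hmax A hA h3 hT
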